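/- arXiv:2009.10108 — 3 statements merged into one kernel-verified Lean document; each statement's English description precedes it below -/
import Mathlib

section
/- Let V be a real normed vector space and let C, D, G : V → V be continuous linear maps satisfying C∘C = -id, G∘G = id, C∘D = -(D∘C), G∘C = -(C∘G), and G∘D = -(D∘G). For a function f : ℝ → V define L f : ℝ → V by (L f)(κ) = -C(f'(κ)) + κ⁻¹ • (D(f(κ)) + (1/2) • C(f(κ))) + G(f(κ)), where f' denotes the derivative. Then for every f : ℝ → V that is twice differentiable at every point of (0,∞), and for every κ > 0, one has κ² • (L(L f))(κ) = -κ² • f''(κ) + κ • f'(κ) + (D∘D + C∘D)(f(κ)) - (3/4) • f(κ) + κ² • f(κ). -/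
/-- the square of the model cone operator
`L f (κ) = -C (f' κ) + κ⁻¹ • (D (f κ) + (1/2) • C (f κ)) + G (f κ)`,
where `C∘C = -id`, `G∘G = id`, and `C, D, G` pairwise anticommute as stated,
satisfies `κ² • (L (L f)) κ = -κ² • f'' κ + κ • f' κ + (D∘D + C∘D)(f κ)
- (3/4) • f κ + κ² • f κ` for `f` twice differentiable on `(0,∞)` and `κ > 0`. -/
theorem cone_operator_square {V : Type*} [NormedAddCommGroup V] [NormedSpace ℝ V]
    (C D G : V →L[ℝ] V)
    (hC : C ∘L C = -(ContinuousLinearMap.id ℝ V))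
    (hG : G ∘L G = ContinuousLinearMap.id ℝ V)
    (hCD : C ∘L D = -(D ∘L C))
    (hGC : G ∘L C = -(C ∘L G))
    (hGD : G ∘L D = -(D ∘L G))
    (L : (ℝ → V) → (ℝ → V))
    (hL : ∀ (f : ℝ → V) (κ : ℝ),
      L f κ = -(C (deriv f κ)) + κ⁻¹ • (D (f κ) + (1/2 : ℝ) • C (f κ)) + G (f κ))
    (f : ℝ → V)
    (hf : ∀ κ ∈ Set.Ioi (0 : ℝ),
      DifferentiableAt ℝ f κ ∧ DifferentiableAt ℝ (deriv f) κ)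
    (κ : ℝ) (hκ : 0 < κ) :
    κ ^ 2 • L (L f) κ =
      -(κ ^ 2) • deriv (deriv f) κ + κ • deriv f κ
        + (D (D (f κ)) + C (D (f κ))) - (3/4 : ℝ) • f κ + κ ^ 2 • f κ := by
  have hκ0 : κ ≠ 0 := ne_of_gt hκ
  set a := f κ with ha
  set b := deriv f κ with hb
  set c := deriv (deriv f) κ with hc
  have hfb : HasDerivAt f b κ := ((hf κ hκ).1).hasDerivAt
  have hfc : HasDerivAt (deriv f) c κ := ((hf κ hκ).2).hasDerivAt
  have hLfun : L f = fun t => -(C (deriv f t)) + t⁻¹ • (D (f t) + (1/2 : ℝ) • C (f t)) + G (f t) :=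
    funext (hL f)
  have h1 : HasDerivAt (fun t => -(C (deriv f t))) (-(C c)) κ :=
    (C.hasFDerivAt.comp_hasDerivAt κ hfc).neg
  have h2v : HasDerivAt (fun t => D (f t) + (1/2 : ℝ) • C (f t))
      (D b + (1/2 : ℝ) • C b) κ :=
    (D.hasFDerivAt.comp_hasDerivAt κ hfb).add ((C.hasFDerivAt.comp_hasDerivAt κ hfb).const_smul _)
  have h2 : HasDerivAt (fun t => t⁻¹ • (D (f t) + (1/2 : ℝ) • C (f t)))
      (κ⁻¹ • (D b + (1/2 : ℝ) • C b) + (-(κ ^ 2)⁻¹) • (D a + (1/2 : ℝ) • C a)) κ :=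
    (hasDerivAt_inv hκ0).smul h2v
  have h3 : HasDerivAt (fun t => G (f t)) (G b) κ := G.hasFDerivAt.comp_hasDerivAt κ hfb
  have hd : deriv (L f) κ =
      -(C c) + (κ⁻¹ • (D b + (1/2 : ℝ) • C b) + (-(κ ^ 2)⁻¹) • (D a + (1/2 : ℝ) • C a)) + G b := by
    rw [hLfun]
    exact ((h1.add h2).add h3).deriv
  have hval : L f κ = -(C b) + κ⁻¹ • (D a + (1/2 : ℝ) • C a) + G a := hL f κ
  have hCC : ∀ x, C (C x) = -x := fun x => by
    have := ContinuousLinearMap.ext_iff.mp hC x; simpa using this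
  have hGG : ∀ x, G (G x) = x := fun x => by
    have := ContinuousLinearMap.ext_iff.mp hG x; simpa using this
  have hDC : ∀ x, D (C x) = -(C (D x)) := fun x => by
    have := ContinuousLinearMap.ext_iff.mp hCD x; simp at this; simp [this]
  have hGC' : ∀ x, G (C x) = -(C (G x)) := fun x => by
    have := ContinuousLinearMap.ext_iff.mp hGC x; simpa using this
  have hGD' : ∀ x, G (D x) = -(D (G x)) := fun x => by
    have := ContinuousLinearMap.ext_iff.mp hGD x; simpa using this
  rw [hL (L f) κ, hd, hval]
  simp only [map_add, map_neg, map_smul, hCC, hGG, hDC, hGC', hGD', smul_neg, neg_neg, smul_add]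
  match_scalars <;> field_simp <;> ring
end

section
/- Let α be a nonzero real number. Suppose f : ℝ → ℝ is twice differentiable at every point of (0,∞) and satisfies the modified Bessel equation κ² f''(κ) + κ f'(κ) - (α² + κ²) f(κ) = 0 for all κ > 0. If the function κ ↦ f(κ)²/κ is integrable on (0,∞), then f(κ) = 0 for all κ > 0. -/
open MeasureTheory

/-- A nonnegative convex integrable function on ℝ vanishes identically. -/
lemma convex_nonneg_integrable_eq_zero (h : ℝ → ℝ)
    (hconv : ConvexOn ℝ Set.univ h) (hpos : ∀ t, 0 ≤ h t)
    (hint : Integrable h) : ∀ t, h t = 0 := by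
  intro c
  by_contra hc
  have hc' : 0 < h c := lt_of_le_of_ne (hpos c) (Ne.symm hc)
  -- find b > c with h b < h c
  have hsmall : ∃ b ∈ Set.Ioi c, h b < h c := by
    by_contra hcon
    push_neg at hcon
    have hd : ∀ x ∈ Set.Ioi c, h c ≤ h x := hcon
    have : IntegrableOn (fun _ : ℝ => h c) (Set.Ioi c) := by
      apply Integrable.mono' (hint.integrableOn) aestronglyMeasurable_const
      filter_upwards [ae_restrict_mem measurableSet_Ioi] with x hx
      rw [Real.norm_eq_abs, abs_of_pos hc']
      exact hd x hx
    rw [integrableOn_const_iff] at this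
    rcases this with h1 | h2
    · exact absurd (enorm_eq_zero.mp h1) (ne_of_gt hc')
    · simp [Real.volume_Ioi] at h2
  have hsmall' : ∃ a ∈ Set.Iio c, h a < h c := by
    by_contra hcon
    push_neg at hcon
    have hd : ∀ x ∈ Set.Iio c, h c ≤ h x := hcon
    have : IntegrableOn (fun _ : ℝ => h c) (Set.Iio c) := by
      apply Integrable.mono' (hint.integrableOn) aestronglyMeasurable_const
      filter_upwards [ae_restrict_mem measurableSet_Iio] with x hx
      rw [Real.norm_eq_abs, abs_of_pos hc']
      exact hd x hx
    rw [integrableOn_const_iff] at this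
    rcases this with h1 | h2
    · exact absurd (enorm_eq_zero.mp h1) (ne_of_gt hc')
    · simp [Real.volume_Iio] at h2
  obtain ⟨b, hb, hbs⟩ := hsmall
  obtain ⟨a, ha, has⟩ := hsmall' 
  have ha' : a < c := ha
  have hb' : c < b := hb
  have hab : a < b := lt_trans ha' hb'
  -- convexity contradiction: c between a and b
  set μ := (b - c) / (b - a) with hμ
  set ν := (c - a) / (b - a) with hν
  have hba : (0:ℝ) < b - a := by linarith
  have hμpos : 0 < μ := div_pos (by linarith) hba
  have hνpos : 0 < ν := div_pos (by linarith) hba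
  have hμ0 : 0 ≤ μ := le_of_lt hμpos
  have hν0 : 0 ≤ ν := le_of_lt hνpos
  have hμν : μ + ν = 1 := by
    rw [hμ, hν, ← add_div, div_eq_one_iff_eq (ne_of_gt hba)]
    ring
  have hcomb : μ • a + ν • b = c := by
    simp only [smul_eq_mul, hμ, hν]
    field_simp
    ring
  have := hconv.2 (Set.mem_univ a) (Set.mem_univ b) hμ0 hν0 hμν
  rw [hcomb] at this
  simp only [smul_eq_mul] at this
  nlinarith [hbs, has]

/-- a solution of the modified Bessel equation
`κ² f'' + κ f' - (α² + κ²) f = 0` on `(0,∞)` with `α ≠ 0` such that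
`κ ↦ f(κ)²/κ` is integrable on `(0,∞)` vanishes identically on `(0,∞)`. -/
theorem modified_bessel_no_L2_solution (α : ℝ) (hα : α ≠ 0) (f : ℝ → ℝ)
    (hf : ∀ κ ∈ Set.Ioi (0 : ℝ),
      DifferentiableAt ℝ f κ ∧ DifferentiableAt ℝ (deriv f) κ)
    (hode : ∀ κ ∈ Set.Ioi (0 : ℝ),
      κ ^ 2 * deriv (deriv f) κ + κ * deriv f κ - (α ^ 2 + κ ^ 2) * f κ = 0)
    (hint : IntegrableOn (fun κ => (f κ) ^ 2 / κ) (Set.Ioi 0)) :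
    ∀ κ ∈ Set.Ioi (0 : ℝ), f κ = 0 := by
  set g : ℝ → ℝ := fun t => f (Real.exp t) with hg_def
  -- first derivative of g
  have hg' : ∀ t : ℝ, HasDerivAt g (deriv f (Real.exp t) * Real.exp t) t := by
    intro t
    exact ((hf _ (Set.mem_Ioi.mpr (Real.exp_pos t))).1.hasDerivAt).comp t (Real.hasDerivAt_exp t)
  have hgderiv : deriv g = fun t => deriv f (Real.exp t) * Real.exp t :=
    funext fun t => (hg' t).deriv
  -- second derivative of g via the ODE
  have hg'' : ∀ t : ℝ, HasDerivAt (deriv g)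
      ((α ^ 2 + Real.exp t ^ 2) * g t) t := by
    intro t
    rw [hgderiv]
    have h1 : HasDerivAt (fun s => deriv f (Real.exp s))
        (deriv (deriv f) (Real.exp t) * Real.exp t) t :=
      ((hf _ (Set.mem_Ioi.mpr (Real.exp_pos t))).2.hasDerivAt).comp t (Real.hasDerivAt_exp t)
    have h2 := h1.mul (Real.hasDerivAt_exp t)
    refine h2.congr_deriv ?_
    have hodet := hode (Real.exp t) (Set.mem_Ioi.mpr (Real.exp_pos t))
    simp only [hg_def]
    nlinarith [hodet]
  -- h = g² is convex with second derivative nonneg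
  set h : ℝ → ℝ := fun t => g t ^ 2 with hh_def
  have hh' : ∀ t : ℝ, HasDerivAt h (2 * g t * deriv g t) t := by
    intro t
    have := (hg' t).pow 2
    rw [← (hg' t).deriv] at this
    refine this.congr_deriv ?_
    push_cast
    ring
  have hhderiv : deriv h = fun t => 2 * g t * deriv g t :=
    funext fun t => (hh' t).deriv
  have hh'' : ∀ t : ℝ, HasDerivAt (deriv h)
      (2 * deriv g t * deriv g t + 2 * g t * ((α ^ 2 + Real.exp t ^ 2) * g t)) t := by
    intro t
    rw [hhderiv]
    have hG : HasDerivAt g (deriv g t) t := by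
      rw [hgderiv]; exact hg' t
    exact (hG.const_mul 2).mul (hg'' t)
  have hconv : ConvexOn ℝ Set.univ h := by
    apply convexOn_of_deriv2_nonneg convex_univ
    · exact fun t _ => ((hh' t).differentiableAt).continuousAt.continuousWithinAt
    · intro t _
      exact ((hh' t).differentiableAt).differentiableWithinAt
    · intro t _
      exact ((hh'' t).differentiableAt).differentiableWithinAt
    · intro t _
      have : deriv^[2] h t = 2 * deriv g t * deriv g t +
          2 * g t * ((α ^ 2 + Real.exp t ^ 2) * g t) := by
        simp only [Function.iterate_succ, Function.iterate_zero, Function.comp_apply, id]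
        exact (hh'' t).deriv
      rw [this]
      have h1 : 0 ≤ α ^ 2 + Real.exp t ^ 2 := by positivity
      nlinarith [sq_nonneg (deriv g t), sq_nonneg (g t), mul_nonneg h1 (sq_nonneg (g t))]
  -- change of variables: h is integrable on ℝ
  have hinth : Integrable h := by
    have hchg := integrableOn_image_iff_integrableOn_abs_deriv_smul
      (f := Real.exp) (f' := Real.exp) (s := Set.univ) MeasurableSet.univ
      (fun x _ => (Real.hasDerivAt_exp x).hasDerivWithinAt)
      (Real.exp_injective.injOn) (fun κ => (f κ) ^ 2 / κ)
    rw [Set.image_univ, Real.range_exp] at hchg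
    have := hchg.mp hint
    rw [← integrableOn_univ]
    apply this.congr_fun _ MeasurableSet.univ
    intro x _
    simp only [smul_eq_mul, abs_of_pos (Real.exp_pos x), hh_def, hg_def]
    field_simp
  -- conclude h = 0 everywhere
  have hzero := convex_nonneg_integrable_eq_zero h hconv (fun t => sq_nonneg (g t)) hinth
  intro κ hκ
  have := hzero (Real.log κ)
  simp only [hh_def, hg_def, Real.exp_log (Set.mem_Ioi.mp hκ)] at this
  exact pow_eq_zero_iff (n := 2) (by norm_num) |>.mp this
end

section
/- Let E be a finite-dimensional real inner product space and let T : E → E be a symmetric linear map having no eigenvalue in the closed interval [-1/2, 1/2]. Suppose f : ℝ → E is twice differentiable at every point of (0,∞) and satisfies -κ² f''(κ) - κ f'(κ) + (T∘T)(f(κ)) + T(f(κ)) + (1/4) f(κ) + κ² f(κ) = 0 for all κ > 0, and suppose the function κ ↦ ‖f(κ)‖²/κ is integrable on (0,∞). Then f(κ) = 0 for all κ > 0. -/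
open MeasureTheory

/-- if a symmetric endomorphism `T` of a finite-dimensional real
inner product space has no eigenvalue in `[-1/2, 1/2]` and `f : ℝ → E` solves
`-κ² f'' - κ f' + T²f + Tf + (1/4) f + κ² f = 0` on `(0,∞)` with
`κ ↦ ‖f(κ)‖²/κ` integrable on `(0,∞)`, then `f` vanishes on `(0,∞)`. -/
theorem cone_kernel_trivial {E : Type*} [NormedAddCommGroup E]
    [InnerProductSpace ℝ E] [FiniteDimensional ℝ E]
    (T : E →ₗ[ℝ] E) (hT : T.IsSymmetric)
    (heig : ∀ μ ∈ Set.Icc (-(1/2) : ℝ) (1/2 : ℝ), ¬ Module.End.HasEigenvalue T μ)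
    (f : ℝ → E)
    (hf : ∀ κ ∈ Set.Ioi (0 : ℝ),
      DifferentiableAt ℝ f κ ∧ DifferentiableAt ℝ (deriv f) κ)
    (hode : ∀ κ ∈ Set.Ioi (0 : ℝ),
      -(κ ^ 2) • deriv (deriv f) κ - κ • deriv f κ + T (T (f κ)) + T (f κ)
        + (1/4 : ℝ) • f κ + κ ^ 2 • f κ = 0)
    (hint : IntegrableOn (fun κ => ‖f κ‖ ^ 2 / κ) (Set.Ioi 0)) :
    ∀ κ ∈ Set.Ioi (0 : ℝ), f κ = 0 := by
  classical
  -- substitute κ = exp t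
  set g : ℝ → E := fun t => f (Real.exp t) with hg_def
  set g1 : ℝ → E := fun t => Real.exp t • deriv f (Real.exp t) with hg1_def
  set g2 : ℝ → E := fun t => T (T (g t)) + T (g t) + (1/4 : ℝ) • g t
      + (Real.exp t) ^ 2 • g t with hg2_def
  have hexp : ∀ t : ℝ, Real.exp t ∈ Set.Ioi (0 : ℝ) := fun t => Real.exp_pos t
  have hgd : ∀ t, HasDerivAt g (g1 t) t := by
    intro t
    have h1 : HasDerivAt f (deriv f (Real.exp t)) (Real.exp t) :=
      (hf _ (hexp t)).1.hasDerivAt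
    exact h1.scomp t (Real.hasDerivAt_exp t)
  -- the ODE rewritten
  have hodekey : ∀ κ : ℝ, 0 < κ →
      κ ^ 2 • deriv (deriv f) κ + κ • deriv f κ
        = T (T (f κ)) + T (f κ) + (1/4 : ℝ) • f κ + κ ^ 2 • f κ := by
    intro κ hκ
    have h := hode κ hκ
    linear_combination (norm := module) -h
  have hg1d : ∀ t, HasDerivAt g1 (g2 t) t := by
    intro t
    have h2 : HasDerivAt (fun s => deriv f (Real.exp s))
        (Real.exp t • deriv (deriv f) (Real.exp t)) t :=
      (hf _ (hexp t)).2.hasDerivAt.scomp t (Real.hasDerivAt_exp t)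
    have h3 := (Real.hasDerivAt_exp t).smul h2
    have h4 : Real.exp t • (Real.exp t • deriv (deriv f) (Real.exp t))
        + Real.exp t • deriv f (Real.exp t) = g2 t := by
      rw [smul_smul, ← sq]
      rw [hg2_def]
      simpa [hg_def] using hodekey (Real.exp t) (Real.exp_pos t)
    rw [h4] at h3
    exact h3
  -- the scalar function u t = ⟪g t, g t⟫
  set u : ℝ → ℝ := fun t => (inner ℝ (g t) (g t) : ℝ) with hu_def
  set u1 : ℝ → ℝ := fun t => 2 * (inner ℝ (g1 t) (g t) : ℝ) with hu1_def
  have hud : ∀ t, HasDerivAt u (u1 t) t := by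
    intro t
    have := (hgd t).inner ℝ (hgd t)
    simpa [hu1_def, hu_def, real_inner_comm, two_mul] using this
  have hu1d : ∀ t, HasDerivAt u1
      (2 * ((inner ℝ (g2 t) (g t) : ℝ) + (inner ℝ (g1 t) (g1 t) : ℝ))) t := by
    intro t
    have h := ((hg1d t).inner ℝ (hgd t)).const_mul (2 : ℝ)
    have e : (2:ℝ) * ((inner ℝ (g1 t) (g1 t) : ℝ) + (inner ℝ (g2 t) (g t) : ℝ))
        = 2 * ((inner ℝ (g2 t) (g t) : ℝ) + (inner ℝ (g1 t) (g1 t) : ℝ)) := by ring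
    rw [e] at h
    exact h
  -- second derivative is nonnegative
  have hnn : ∀ t, 0 ≤ 2 * ((inner ℝ (g2 t) (g t) : ℝ) + (inner ℝ (g1 t) (g1 t) : ℝ)) := by
    intro t
    have h1 : (0:ℝ) ≤ inner ℝ (g1 t) (g1 t) := real_inner_self_nonneg
    have h2 : (inner ℝ (g2 t) (g t) : ℝ)
        = ‖T (g t)‖ ^ 2 + (inner ℝ (T (g t)) (g t) : ℝ) + (1/4) * ‖g t‖ ^ 2
          + (Real.exp t) ^ 2 * ‖g t‖ ^ 2 := by
      rw [hg2_def]
      rw [inner_add_left, inner_add_left, inner_add_left, real_inner_smul_left,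
        real_inner_smul_left, hT (T (g t)) (g t), ← hT (T (g t)) (g t)]
      rw [hT (T (g t)) (g t), real_inner_self_eq_norm_sq, real_inner_self_eq_norm_sq]
    have h3 : |(inner ℝ (T (g t)) (g t) : ℝ)| ≤ ‖T (g t)‖ * ‖g t‖ :=
      abs_real_inner_le_norm _ _
    have h4 : (0:ℝ) ≤ (inner ℝ (g2 t) (g t) : ℝ) := by
      rw [h2]
      have h5 := abs_le.1 h3
      nlinarith [sq_nonneg (‖T (g t)‖ - ‖g t‖ / 2), sq_nonneg (Real.exp t * ‖g t‖)]
    linarith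
  -- u is convex
  have hderiv_u : deriv u = u1 := funext fun t => (hud t).deriv
  have hconv : ConvexOn ℝ Set.univ u := by
    apply convexOn_of_deriv2_nonneg convex_univ
    · exact fun t _ => ((hud t).differentiableAt).continuousAt.continuousWithinAt
    · exact fun t _ => ((hud t).differentiableAt).differentiableWithinAt
    · intro t _
      rw [hderiv_u]
      exact ((hu1d t).differentiableAt).differentiableWithinAt
    · intro t _
      have hit : deriv^[2] u t = 2 * ((inner ℝ (g2 t) (g t) : ℝ)
          + (inner ℝ (g1 t) (g1 t) : ℝ)) := by
        have h1 : deriv^[2] u t = deriv (deriv u) t := by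
          simp [Function.iterate_succ_apply']
        rw [h1, hderiv_u]
        exact (hu1d t).deriv
      rw [hit]
      exact hnn t
  -- u is integrable on ℝ
  have hu_int : Integrable u := by
    have hinj : Set.InjOn Real.exp Set.univ := Real.exp_injective.injOn
    have hderiv : ∀ x ∈ (Set.univ : Set ℝ),
        HasDerivWithinAt Real.exp (Real.exp x) Set.univ x :=
      fun x _ => (Real.hasDerivAt_exp x).hasDerivWithinAt
    have himg : Real.exp '' Set.univ = Set.Ioi (0:ℝ) := by
      rw [Set.image_univ, Real.range_exp]
    have := (integrableOn_image_iff_integrableOn_abs_deriv_smul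
      MeasurableSet.univ hderiv hinj (fun κ => ‖f κ‖ ^ 2 / κ)).1
    rw [himg] at this
    have h2 := this hint
    have h3 : (fun x => |Real.exp x| • (‖f (Real.exp x)‖ ^ 2 / Real.exp x)) = u := by
      funext x
      have hx : Real.exp x ≠ 0 := (Real.exp_pos x).ne'
      rw [hu_def]
      simp only [smul_eq_mul, abs_of_pos (Real.exp_pos x)]
      rw [real_inner_self_eq_norm_sq]
      field_simp [hg_def]
      rfl
    rw [h3] at h2
    rwa [integrableOn_univ] at h2
  have hu_nonneg : ∀ t, 0 ≤ u t := fun t => real_inner_self_nonneg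
  -- main claim: u ≡ 0 since it is convex, nonnegative and integrable
  have hu_zero : ∀ t, u t = 0 := by
    intro t0
    by_contra hne
    have hpos : 0 < u t0 := lt_of_le_of_ne (hu_nonneg t0) (Ne.symm hne)
    -- on some half-line, u ≥ u t0
    have key : (∀ t ≥ t0 + 1, u t0 ≤ u t) ∨ (∀ t ≤ t0, u t0 ≤ u t) := by
      rcases le_or_gt (u t0) (u (t0 + 1)) with hc | hc
      · left
        intro t ht
        have hpos' : (0:ℝ) < t - t0 := by linarith
        set a : ℝ := (t - (t0 + 1)) / (t - t0) with ha_def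
        set b : ℝ := 1 / (t - t0) with hb_def
        have ha : 0 ≤ a := div_nonneg (by linarith) (by linarith)
        have hb : 0 < b := by positivity
        have hab : a + b = 1 := by
          rw [ha_def, hb_def]
          field_simp
          ring
        have hcomb : a * t0 + b * t = t0 + 1 := by
          rw [ha_def, hb_def]
          field_simp
          ring
        have hcv : u (a * t0 + b * t) ≤ a * u t0 + b * u t :=
          hconv.2 (Set.mem_univ t0) (Set.mem_univ t) ha hb.le hab
        rw [hcomb] at hcv
        -- u (t0+1) ≤ a * u t0 + b * u t, and u t0 ≤ u (t0+1)
        nlinarith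
      · right
        intro t ht
        have hpos' : (0:ℝ) < t0 + 1 - t := by linarith
        set a : ℝ := (t0 - t) / (t0 + 1 - t) with ha_def
        set b : ℝ := 1 / (t0 + 1 - t) with hb_def
        have ha : 0 ≤ a := div_nonneg (by linarith) (by linarith)
        have hb : 0 < b := by positivity
        have hab : a + b = 1 := by
          rw [ha_def, hb_def]
          field_simp
          ring
        have hcomb : a * (t0 + 1) + b * t = t0 := by
          rw [ha_def, hb_def]
          field_simp
          ring
        have hcv : u (a * (t0 + 1) + b * t) ≤ a * u (t0 + 1) + b * u t :=
          hconv.2 (Set.mem_univ (t0 + 1)) (Set.mem_univ t) ha hb.le hab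
        rw [hcomb] at hcv
        -- u t0 ≤ a * u (t0+1) + b * u t with u (t0+1) < u t0 and a + b = 1
        nlinarith
    -- in either case, the constant u t0 > 0 is dominated by u on a set of
    -- infinite measure, contradicting integrability
    rcases key with h | h
    · have hsub : ∀ᵐ x ∂(volume.restrict (Set.Ici (t0 + 1))),
          ‖(u t0 : ℝ)‖ ≤ u x := by
        rw [ae_restrict_iff' measurableSet_Ici]
        filter_upwards with x hx
        rw [Real.norm_eq_abs, abs_of_pos hpos]
        exact h x hx
      have hconst : IntegrableOn (fun _ => u t0) (Set.Ici (t0 + 1)) :=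
        Integrable.mono' (hu_int.integrableOn) aestronglyMeasurable_const hsub
      rcases (integrableOn_const_iff enorm_ne_top).1 hconst with h0 | hfin
      · exact absurd (enorm_eq_zero.1 h0) hpos.ne'
      · rw [Real.volume_Ici] at hfin; exact absurd hfin (lt_irrefl _)
    · have hsub : ∀ᵐ x ∂(volume.restrict (Set.Iic t0)),
          ‖(u t0 : ℝ)‖ ≤ u x := by
        rw [ae_restrict_iff' measurableSet_Iic]
        filter_upwards with x hx
        rw [Real.norm_eq_abs, abs_of_pos hpos]
        exact h x hx
      have hconst : IntegrableOn (fun _ => u t0) (Set.Iic t0) :=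
        Integrable.mono' (hu_int.integrableOn) aestronglyMeasurable_const hsub
      rcases (integrableOn_const_iff enorm_ne_top).1 hconst with h0 | hfin
      · exact absurd (enorm_eq_zero.1 h0) hpos.ne'
      · rw [Real.volume_Iic] at hfin; exact absurd hfin (lt_irrefl _)
  -- conclude
  intro κ hκ
  have hκ' : (0:ℝ) < κ := hκ
  have h0 : u (Real.log κ) = 0 := hu_zero _
  rw [hu_def] at h0
  simp only [hg_def, Real.exp_log hκ'] at h0
  exact inner_self_eq_zero.1 h0
end
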